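/- Let α ∈ (0,1) and λ ≥ 0. Suppose c ≡ 0 in the operator ℒ, f satisfies assumption A1 with constant λ, and in addition there are constants σ₁ ≤ 0 ≤ σ₂ with f(x, t, σ₁) ≤ 0 and f(x, t, σ₂) ≥ 0 for all (x,t) ∈ Ω̄ × (0,T]. Let the temporal mesh satisfy λ τ_j^α < 1/Γ(2−α) for all j, let h = 1/N satisfy the discrete maximum principle condition, and let σ₁ ≤ u₀(x) ≤ σ₂ for all x ∈ Ω̄. Then the unique solution (U^m)_{m=0}^M of the finite difference scheme satisfies σ₁ ≤ U^m(z) ≤ σ₂ for all z ∈ Ω̄_h and all m = 0,…,M. -/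

import Mathlib

open Real MeasureTheory

/-- The L1 discrete Caputo operator of order `α` on the temporal mesh `t`. -/
noncomputable def deltaL1 (α : ℝ) (t : ℕ → ℝ) (V : ℕ → ℝ) (m : ℕ) : ℝ :=
  (1 / Real.Gamma (1 - α)) *
    ∑ j ∈ Finset.Icc 1 m,
      ((V j - V (j - 1)) / (t j - t (j - 1))) *
        ∫ s in (t (j - 1))..(t j), (t m - s) ^ (-α)

/-- The closed unit cube `Ω̄ = [0,1]^d`. -/
def cube (d : ℕ) : Set (Fin d → ℝ) := {x | ∀ k, x k ∈ Set.Icc (0 : ℝ) 1}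

/-- The open unit cube `Ω = (0,1)^d`. -/
def openCube (d : ℕ) : Set (Fin d → ℝ) := {x | ∀ k, x k ∈ Set.Ioo (0 : ℝ) 1}

/-- Classical partial derivative in the `k`-th coordinate. -/
noncomputable def pder {d : ℕ} (k : Fin d) (g : (Fin d → ℝ) → ℝ)
    (x : Fin d → ℝ) : ℝ :=
  deriv (fun s => g (Function.update x k s)) (x k)

/-- The second-order elliptic operator
`ℒu = Σ_k ( −∂_{x_k}(a_k ∂_{x_k} u) + b_k ∂_{x_k} u ) + c·u`. -/
noncomputable def Lop {d : ℕ} (a b : Fin d → (Fin d → ℝ) → ℝ → ℝ)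
    (c : (Fin d → ℝ) → ℝ → ℝ) (u : (Fin d → ℝ) → ℝ → ℝ)
    (x : Fin d → ℝ) (tt : ℝ) : ℝ :=
  (∑ k, (-(pder k (fun y => a k y tt * pder k (fun z => u z tt) y) x)
      + b k x tt * pder k (fun z => u z tt) x))
    + c x tt * u x tt

/-- The Caputo fractional derivative in time of order `α`. -/
noncomputable def caputo (α : ℝ) (g : ℝ → ℝ) (t : ℝ) : ℝ :=
  (1 / Real.Gamma (1 - α)) * ∫ s in (0 : ℝ)..t, (t - s) ^ (-α) * deriv g s

/-- Coordinates of the grid node with multi-index `i` (mesh size `h = 1/N`). -/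
noncomputable def gridPt (d N : ℕ) (i : Fin d → ℕ) : Fin d → ℝ :=
  fun k => (i k : ℝ) / N

/-- The standard finite difference spatial operator `ℒ_h` at time `tm`. -/
noncomputable def Lh (d N : ℕ) (a b : Fin d → (Fin d → ℝ) → ℝ → ℝ)
    (c : (Fin d → ℝ) → ℝ → ℝ) (tm : ℝ) (V : (Fin d → ℕ) → ℝ)
    (i : Fin d → ℕ) : ℝ :=
  let h : ℝ := 1 / N
  let x : Fin d → ℝ := gridPt d N i
  (∑ k, (1 / h ^ 2) *
      (a k (Function.update x k (x k + h / 2)) tm *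
          (V i - V (Function.update i k (i k + 1)))
        + a k (Function.update x k (x k - h / 2)) tm *
          (V i - V (Function.update i k (i k - 1)))))
    + (∑ k, (1 / (2 * h)) * b k x tm *
        (V (Function.update i k (i k + 1)) - V (Function.update i k (i k - 1))))
    + c x tm * V i

/-- The finite difference scheme: L1 in time, standard finite differences in
space, homogeneous Dirichlet boundary conditions and initial condition `u₀`. -/
def FDScheme (α : ℝ) (d N M : ℕ) (t : ℕ → ℝ)
    (a b : Fin d → (Fin d → ℝ) → ℝ → ℝ) (c : (Fin d → ℝ) → ℝ → ℝ)
    (f : (Fin d → ℝ) → ℝ → ℝ → ℝ) (u₀ : (Fin d → ℝ) → ℝ)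
    (U : ℕ → (Fin d → ℕ) → ℝ) : Prop :=
  (∀ i : Fin d → ℕ, (∀ k, i k ≤ N) → U 0 i = u₀ (gridPt d N i)) ∧
  (∀ m, 1 ≤ m → m ≤ M → ∀ i : Fin d → ℕ, (∀ k, i k ≤ N) →
    (∃ k, i k = 0 ∨ i k = N) → U m i = 0) ∧
  (∀ m, 1 ≤ m → m ≤ M → ∀ i : Fin d → ℕ,
    (∀ k, 1 ≤ i k ∧ i k ≤ N - 1) →
    deltaL1 α t (fun j => U j i) m + Lh d N a b c (t m) (U m) i
      + f (gridPt d N i) (t m) (U m i) = 0)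


/-- Abel-summation bound for the L1 weights. -/
lemma abel_bound (D W : ℕ → ℝ) :
    ∀ m : ℕ, 1 ≤ m → (∀ j, j ≤ m - 1 → W j ≤ 0) → 0 ≤ D 1 →
      (∀ j, 1 ≤ j → j + 1 ≤ m → D j ≤ D (j + 1)) →
      D m * W m ≤ ∑ j ∈ Finset.Icc 1 m, D j * (W j - W (j - 1)) := by
  intro m
  induction m with
  | zero => intro h; omega
  | succ m ih =>
    intro _ hW hD1 hmono
    rcases Nat.eq_zero_or_pos m with rfl | hm
    · simp only [Finset.Icc_self, Finset.sum_singleton]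
      have h0 : W 0 ≤ 0 := hW 0 (by omega)
      nlinarith [mul_nonneg hD1 (neg_nonneg.2 h0)]
    · rw [Finset.sum_Icc_succ_top (by omega)]
      have h1 := ih hm (fun j hj => hW j (by omega))
        hD1 (fun j hj1 hj2 => hmono j hj1 (by omega))
      have h2 : D m ≤ D (m + 1) := hmono m hm le_rfl
      have h3 : W m ≤ 0 := hW m (by omega)
      have h4 : (m + 1) - 1 = m := rfl
      rw [h4]
      nlinarith [mul_nonneg (sub_nonneg.2 h2) (neg_nonneg.2 h3)]

/-- Exact value of the L1 kernel integral. -/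
lemma int_kernel {α : ℝ} (hα : α ∈ Set.Ioo (0 : ℝ) 1) {u v w : ℝ} (hvw : v ≤ w) :
    ∫ s in u..v, (w - s) ^ (-α) =
      ((w - u) ^ (1 - α) - (w - v) ^ (1 - α)) / (1 - α) := by
  rw [intervalIntegral.integral_comp_sub_left (fun x : ℝ => x ^ (-α)) w]
  rw [integral_rpow (Or.inl (by linarith [hα.2]))]
  rw [show -α + 1 = 1 - α by ring]

/-- Strict monotonicity of the mesh. -/
lemma t_strict (t : ℕ → ℝ) (M : ℕ) (hmono : ∀ j, j < M → t j < t (j + 1)) :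
    ∀ i j : ℕ, i < j → j ≤ M → t i < t j := by
  intro i j
  induction j with
  | zero => intro h _; omega
  | succ j ih =>
    intro hij hjM
    rcases Nat.lt_or_ge i j with h | h
    · exact lt_trans (ih h (by omega)) (hmono j (by omega))
    · have : i = j := by omega
      subst this; exact hmono i (by omega)

lemma deltaL1_neg (α : ℝ) (t : ℕ → ℝ) (V : ℕ → ℝ) (m : ℕ) :
    deltaL1 α t (fun j => -V j) m = -deltaL1 α t V m := by
  unfold deltaL1
  rw [← mul_neg, ← Finset.sum_neg_distrib]
  congr 1
  apply Finset.sum_congr rfl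
  intro j _
  ring

/-- `deltaL1` as a weighted sum of differences. -/
lemma deltaL1_eq (α : ℝ) (hα : α ∈ Set.Ioo (0 : ℝ) 1) (t : ℕ → ℝ) (M : ℕ)
    (hmono : ∀ j, j < M → t j < t (j + 1)) (m : ℕ) (hm1 : 1 ≤ m) (hmM : m ≤ M)
    (V : ℕ → ℝ) :
    deltaL1 α t V m = ∑ j ∈ Finset.Icc 1 m,
      (((t m - t (j - 1)) ^ (1 - α) - (t m - t j) ^ (1 - α)) /
        ((t j - t (j - 1)) * ((1 - α) * Real.Gamma (1 - α)))) * (V j - V (j - 1)) := by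
  unfold deltaL1
  rw [Finset.mul_sum]
  apply Finset.sum_congr rfl
  intro j hj
  obtain ⟨hj1, hjm⟩ := Finset.mem_Icc.1 hj
  have h1 : t (j - 1) < t j := t_strict t M hmono (j - 1) j (by omega) (by omega)
  have h2 : t j ≤ t m := by
    rcases eq_or_lt_of_le hjm with rfl | h
    · exact le_rfl
    · exact (t_strict t M hmono j m h hmM).le
  rw [int_kernel hα h2]
  have hτ : t j - t (j - 1) ≠ 0 := ne_of_gt (by linarith)
  have hβ : (1 : ℝ) - α ≠ 0 := ne_of_gt (by linarith [hα.2])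
  have hΓ : Real.Gamma (1 - α) ≠ 0 :=
    ne_of_gt (Real.Gamma_pos_of_pos (by linarith [hα.2]))
  field_simp

lemma term_nonneg (n A1 A2 B p q : ℝ) (hn : 0 < n)
    (hA1 : |B| ≤ 2 * n * A1) (hA2 : |B| ≤ 2 * n * A2)
    (hp : 0 ≤ p) (hq : 0 ≤ q) :
    0 ≤ (1 / (1 / n) ^ 2) * (A1 * p + A2 * q) + (1 / (2 * (1 / n))) * B * (q - p) := by
  have h1 : 0 ≤ 2 * n * A1 - B := by linarith [le_abs_self B]
  have h2 : 0 ≤ 2 * n * A2 + B := by linarith [neg_abs_le B]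
  have e : (1 / (1 / n) ^ 2) * (A1 * p + A2 * q) + (1 / (2 * (1 / n))) * B * (q - p)
      = (n / 2) * (p * (2 * n * A1 - B) + q * (2 * n * A2 + B)) := by
    field_simp
    ring
  rw [e]
  have := add_nonneg (mul_nonneg hp h1) (mul_nonneg hq h2)
  positivity

lemma Lh_neg (d N : ℕ) (a b : Fin d → (Fin d → ℝ) → ℝ → ℝ)
    (c : (Fin d → ℝ) → ℝ → ℝ) (tm : ℝ) (V : (Fin d → ℕ) → ℝ) (i : Fin d → ℕ) :
    Lh d N a b c tm (fun j => -V j) i = -Lh d N a b c tm V i := by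
  simp only [Lh]
  rw [neg_add, neg_add, ← Finset.sum_neg_distrib, ← Finset.sum_neg_distrib]
  congr 1
  congr 1
  · exact Finset.sum_congr rfl fun k _ => by ring
  · exact Finset.sum_congr rfl fun k _ => by ring
  · ring

/-- positivity and monotonicity of the L1 coefficients, plus `lam < D m`. -/
lemma D_pos (α : ℝ) (hα : α ∈ Set.Ioo (0 : ℝ) 1) (t : ℕ → ℝ) (M : ℕ)
    (hmono : ∀ j, j < M → t j < t (j + 1)) (m : ℕ) (hmM : m ≤ M)
    (j : ℕ) (hj1 : 1 ≤ j) (hjm : j ≤ m) :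
    0 < ((t m - t (j - 1)) ^ (1 - α) - (t m - t j) ^ (1 - α)) /
      ((t j - t (j - 1)) * ((1 - α) * Real.Gamma (1 - α))) := by
  have hβ : (0 : ℝ) < 1 - α := by linarith [hα.2]
  have h1 : t (j - 1) < t j := t_strict t M hmono (j - 1) j (by omega) (by omega)
  have h2 : t j ≤ t m := by
    rcases eq_or_lt_of_le hjm with rfl | h
    · exact le_rfl
    · exact (t_strict t M hmono j m h hmM).le
  have hnum : (t m - t j) ^ (1 - α) < (t m - t (j - 1)) ^ (1 - α) :=
    Real.rpow_lt_rpow (by linarith) (by linarith) hβ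
  have hΓ : 0 < Real.Gamma (1 - α) := Real.Gamma_pos_of_pos hβ
  exact div_pos (by linarith) (mul_pos (by linarith) (by positivity))

lemma D_mono (α : ℝ) (hα : α ∈ Set.Ioo (0 : ℝ) 1) (t : ℕ → ℝ) (M : ℕ)
    (hmono : ∀ j, j < M → t j < t (j + 1)) (m : ℕ) (hmM : m ≤ M)
    (j : ℕ) (hj1 : 1 ≤ j) (hjm : j + 1 ≤ m) :
    ((t m - t (j - 1)) ^ (1 - α) - (t m - t j) ^ (1 - α)) /
      ((t j - t (j - 1)) * ((1 - α) * Real.Gamma (1 - α))) ≤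
    ((t m - t ((j + 1) - 1)) ^ (1 - α) - (t m - t (j + 1)) ^ (1 - α)) /
      ((t (j + 1) - t ((j + 1) - 1)) * ((1 - α) * Real.Gamma (1 - α))) := by
  have hβ : (0 : ℝ) < 1 - α := by linarith [hα.2]
  have hβ1 : (1 : ℝ) - α < 1 := by linarith [hα.1]
  have hΓ : 0 < Real.Gamma (1 - α) := Real.Gamma_pos_of_pos hβ
  simp only [Nat.add_sub_cancel]
  set x := t m - t (j + 1) with hx
  set y := t m - t j with hy
  set z := t m - t (j - 1) with hz
  have hxy : x < y := by
    have := t_strict t M hmono j (j + 1) (by omega) (by omega)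
    simp only [hx, hy]; linarith
  have hyz : y < z := by
    have := t_strict t M hmono (j - 1) j (by omega) (by omega)
    simp only [hy, hz]; linarith
  have hx0 : (0 : ℝ) ≤ x := by
    rcases eq_or_lt_of_le hjm with h | h
    · simp only [hx, h]; simp
    · have := t_strict t M hmono (j + 1) m h hmM
      simp only [hx]; linarith
  have hz0 : (0 : ℝ) ≤ z := by linarith
  have hcc : ConcaveOn ℝ (Set.Ici (0 : ℝ)) (fun s : ℝ => s ^ (1 - α)) :=
    (strictConcaveOn_rpow hβ hβ1).concaveOn
  have hslope := hcc.slope_anti_adjacent (Set.mem_Ici.2 hx0) (Set.mem_Ici.2 hz0) hxy hyz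
  -- hslope : (z^β - y^β)/(z - y) ≤ (y^β - x^β)/(y - x)
  have e1 : t j - t (j - 1) = z - y := by simp only [hy, hz]; ring
  have e2 : t (j + 1) - t j = y - x := by simp only [hx, hy]; ring
  have l1 : (z ^ (1 - α) - y ^ (1 - α)) / ((z - y) * ((1 - α) * Real.Gamma (1 - α)))
      = (z ^ (1 - α) - y ^ (1 - α)) / (z - y) / ((1 - α) * Real.Gamma (1 - α)) :=
    (div_div _ _ _).symm
  have l2 : (y ^ (1 - α) - x ^ (1 - α)) / ((y - x) * ((1 - α) * Real.Gamma (1 - α)))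
      = (y ^ (1 - α) - x ^ (1 - α)) / (y - x) / ((1 - α) * Real.Gamma (1 - α)) :=
    (div_div _ _ _).symm
  rw [e1, e2, l1, l2]
  exact (div_le_div_iff_of_pos_right (mul_pos hβ hΓ)).2 hslope

lemma D_last (α lam : ℝ) (hα : α ∈ Set.Ioo (0 : ℝ) 1) (t : ℕ → ℝ) (M : ℕ)
    (hmono : ∀ j, j < M → t j < t (j + 1)) (m : ℕ) (hm1 : 1 ≤ m) (hmM : m ≤ M)
    (hmesh : lam * (t m - t (m - 1)) ^ α < 1 / Real.Gamma (2 - α)) :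
    lam < ((t m - t (m - 1)) ^ (1 - α) - (t m - t m) ^ (1 - α)) /
      ((t m - t (m - 1)) * ((1 - α) * Real.Gamma (1 - α))) := by
  have hβ : (0 : ℝ) < 1 - α := by linarith [hα.2]
  have hΓ : 0 < Real.Gamma (1 - α) := Real.Gamma_pos_of_pos hβ
  have hτ : 0 < t m - t (m - 1) := by
    have := t_strict t M hmono (m - 1) m (by omega) hmM
    linarith
  set τ := t m - t (m - 1) with hτdef
  have hG2 : Real.Gamma (2 - α) = (1 - α) * Real.Gamma (1 - α) := by
    rw [show (2 : ℝ) - α = (1 - α) + 1 by ring]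
    exact Real.Gamma_add_one (ne_of_gt hβ)
  rw [hG2] at hmesh
  have e0 : t m - t m = 0 := sub_self _
  rw [e0, Real.zero_rpow (ne_of_gt hβ), sub_zero]
  rw [lt_div_iff₀ (by positivity)]
  have hττ : τ = τ ^ (1 - α) * τ ^ α := by
    rw [← Real.rpow_add hτ]
    norm_num
  have hτα : (0 : ℝ) < τ ^ α := Real.rpow_pos_of_pos hτ α
  have hτβ : (0 : ℝ) < τ ^ (1 - α) := Real.rpow_pos_of_pos hτ (1 - α)
  calc lam * (τ * ((1 - α) * Real.Gamma (1 - α)))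
      = (lam * τ ^ α) * ((1 - α) * Real.Gamma (1 - α)) * τ ^ (1 - α) := by
        conv_lhs => rw [hττ]
        ring
    _ < (1 / ((1 - α) * Real.Gamma (1 - α))) * ((1 - α) * Real.Gamma (1 - α)) * τ ^ (1 - α) := by
        apply mul_lt_mul_of_pos_right _ hτβ
        exact mul_lt_mul_of_pos_right hmesh (by positivity)
    _ = τ ^ (1 - α) := by
        rw [one_div_mul_cancel (ne_of_gt (mul_pos hβ hΓ)), one_mul]

lemma gridPt_mem_cube (d N : ℕ) (hN : 1 ≤ N) (i : Fin d → ℕ) (hi : ∀ k, i k ≤ N) :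
    gridPt d N i ∈ cube d := by
  intro k
  have hN0 : (0 : ℝ) < (N : ℝ) := by exact_mod_cast hN
  simp only [gridPt]
  constructor
  · positivity
  · rw [div_le_one hN0]
    exact_mod_cast hi k

lemma upper_bound (α T lam σ₂ : ℝ) (hα : α ∈ Set.Ioo (0 : ℝ) 1) (hlam : 0 ≤ lam)
    (d : ℕ) (a b : Fin d → (Fin d → ℝ) → ℝ → ℝ)
    (hapos : ∀ k, ∀ x ∈ cube d, ∀ t' ∈ Set.Icc (0 : ℝ) T, 0 < a k x t')
    (f : (Fin d → ℝ) → ℝ → ℝ → ℝ)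
    (hfA1 : ∀ x t' s₁ s₂, s₂ ≤ s₁ → f x t' s₁ - f x t' s₂ ≥ -lam * (s₁ - s₂))
    (hσ₂ : 0 ≤ σ₂)
    (hfσ₂ : ∀ x ∈ cube d, ∀ t' ∈ Set.Ioc (0 : ℝ) T, 0 ≤ f x t' σ₂)
    (M : ℕ) (hM : 1 ≤ M) (t : ℕ → ℝ) (ht0 : t 0 = 0) (htM : t M = T)
    (hmono : ∀ j, j < M → t j < t (j + 1))
    (hmesh : ∀ j, 1 ≤ j → j ≤ M →
      lam * (t j - t (j - 1)) ^ α < 1 / Real.Gamma (2 - α))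
    (N : ℕ) (hN : 1 ≤ N)
    (hdmp : ∀ k, ∀ x ∈ cube d, ∀ t' ∈ Set.Ioc (0 : ℝ) T,
      ∀ x' ∈ cube d, ∀ t'' ∈ Set.Ioc (0 : ℝ) T,
      (1 / 2) * |b k x t'| * (a k x' t'')⁻¹ ≤ (N : ℝ))
    (u₀ : (Fin d → ℝ) → ℝ) (hu₀ : ∀ x ∈ cube d, u₀ x ≤ σ₂)
    (U : ℕ → (Fin d → ℕ) → ℝ) (hU : FDScheme α d N M t a b (fun _ _ => 0) f u₀ U) :
    ∀ m, m ≤ M → ∀ i : Fin d → ℕ, (∀ k, i k ≤ N) → U m i ≤ σ₂ := by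
  have hβ : (0 : ℝ) < 1 - α := by linarith [hα.2]
  have hN0 : (0 : ℝ) < (N : ℝ) := by exact_mod_cast hN
  intro m
  induction m using Nat.strong_induction_on with
  | _ m IH =>
    intro hmM i hi
    rcases Nat.eq_zero_or_pos m with rfl | hm
    · rw [hU.1 i hi]
      exact hu₀ _ (gridPt_mem_cube d N hN i hi)
    -- time point in (0, T]
    have htmT : t m ∈ Set.Ioc (0 : ℝ) T := by
      constructor
      · rw [← ht0]; exact t_strict t M hmono 0 m hm hmM
      · rw [← htM]
        rcases eq_or_lt_of_le hmM with rfl | h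
        · exact le_rfl
        · exact (t_strict t M hmono m M h le_rfl).le
    -- pick a maximizing node
    obtain ⟨i₀, hmax⟩ := Finite.exists_max
      (fun i : Fin d → Fin (N + 1) => U m (fun k => (i k : ℕ)))
    set istar : Fin d → ℕ := fun k => (i₀ k : ℕ) with histar
    have hiN : ∀ k, istar k ≤ N := fun k => Nat.lt_succ_iff.1 (i₀ k).isLt
    have hmaxall : ∀ i' : Fin d → ℕ, (∀ k, i' k ≤ N) → U m i' ≤ U m istar := by
      intro i' hi'
      have := hmax (fun k => (⟨i' k, Nat.lt_succ_of_le (hi' k)⟩ : Fin (N + 1)))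
      simpa using this
    refine le_trans (hmaxall i hi) ?_
    by_contra hcon
    push_neg at hcon
    -- istar is interior
    have hint : ∀ k, 1 ≤ istar k ∧ istar k ≤ N - 1 := by
      by_contra hni
      rcases not_forall.1 hni with ⟨k, hk⟩
      have hb : istar k = 0 ∨ istar k = N := by
        have := hiN k; omega
      have h0 : U m istar = 0 := hU.2.1 m hm hmM istar hiN ⟨k, hb⟩
      rw [h0] at hcon; linarith
    -- the scheme equation
    have heq := hU.2.2 m hm hmM istar hint
    set x : Fin d → ℝ := gridPt d N istar with hx
    have hxc : x ∈ cube d := gridPt_mem_cube d N hN istar hiN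
    -- spatial operator is nonnegative at the max
    have hLh : 0 ≤ Lh d N a b (fun _ _ => 0) (t m) (U m) istar := by
      simp only [Lh, mul_zero, zero_mul, add_zero]
      rw [← Finset.sum_add_distrib]
      apply Finset.sum_nonneg
      intro k _
      have hik1 : 1 ≤ istar k := (hint k).1
      have hikN : istar k ≤ N - 1 := (hint k).2
      have hikR : (1 : ℝ) ≤ (istar k : ℝ) := by exact_mod_cast hik1
      have hikR2 : (istar k : ℝ) ≤ (N : ℝ) - 1 := by
        have h1 : (istar k : ℝ) ≤ ((N - 1 : ℕ) : ℝ) := by exact_mod_cast hikN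
        have h2 : ((N - 1 : ℕ) : ℝ) = (N : ℝ) - 1 := by
          rw [Nat.cast_sub hN]; norm_num
        linarith [h1, h2.le, h2.ge]
      -- midpoints are in the cube
      have hxk : x k = (istar k : ℝ) / N := rfl
      have hmid1 : Function.update x k (x k + (1 / (N : ℝ)) / 2) ∈ cube d := by
        intro k'
        rcases eq_or_ne k' k with rfl | hne
        · rw [Function.update_self]
          constructor
          · have h0 := (hxc k').1
            have h1 : (0:ℝ) < 1 / (N:ℝ) / 2 := by positivity
            linarith
          · rw [hxk, show ((istar k' : ℝ)) / (N:ℝ) + 1 / (N:ℝ) / 2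
                = (2 * (istar k' : ℝ) + 1) / (2 * (N:ℝ)) from by field_simp,
              div_le_one (by positivity)]
            nlinarith
        · rw [Function.update_of_ne hne]; exact hxc k'
      have hmid2 : Function.update x k (x k - (1 / (N : ℝ)) / 2) ∈ cube d := by
        intro k'
        rcases eq_or_ne k' k with rfl | hne
        · rw [Function.update_self]
          constructor
          · rw [hxk, sub_nonneg, div_div,
              div_le_div_iff₀ (by positivity) (by positivity)]
            nlinarith
          · have := (hxc k').2
            have h12 : (0:ℝ) < 1 / (N:ℝ) / 2 := by positivity
            linarith
        · rw [Function.update_of_ne hne]; exact hxc k'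
      -- positivity of a and the dmp bounds
      have ha1 : 0 < a k (Function.update x k (x k + (1 / (N : ℝ)) / 2)) (t m) :=
        hapos k _ hmid1 (t m) ⟨htmT.1.le, htmT.2⟩
      have ha2 : 0 < a k (Function.update x k (x k - (1 / (N : ℝ)) / 2)) (t m) :=
        hapos k _ hmid2 (t m) ⟨htmT.1.le, htmT.2⟩
      have hd1 := hdmp k x hxc (t m) htmT _ hmid1 (t m) htmT
      have hd2 := hdmp k x hxc (t m) htmT _ hmid2 (t m) htmT
      have hB1 : |b k x (t m)| ≤ 2 * (N : ℝ) *
          a k (Function.update x k (x k + (1 / (N : ℝ)) / 2)) (t m) := by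
        rw [mul_inv_le_iff₀ ha1] at hd1
        nlinarith
      have hB2 : |b k x (t m)| ≤ 2 * (N : ℝ) *
          a k (Function.update x k (x k - (1 / (N : ℝ)) / 2)) (t m) := by
        rw [mul_inv_le_iff₀ ha2] at hd2
        nlinarith
      -- neighbours are grid nodes
      have hnb1 : ∀ k', Function.update istar k (istar k + 1) k' ≤ N := by
        intro k'
        rcases eq_or_ne k' k with rfl | hne
        · rw [Function.update_self]; omega
        · rw [Function.update_of_ne hne]; exact hiN k'
      have hnb2 : ∀ k', Function.update istar k (istar k - 1) k' ≤ N := by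
        intro k'
        rcases eq_or_ne k' k with rfl | hne
        · rw [Function.update_self]; omega
        · rw [Function.update_of_ne hne]; exact hiN k'
      have hp : 0 ≤ U m istar - U m (Function.update istar k (istar k + 1)) :=
        sub_nonneg.2 (hmaxall _ hnb1)
      have hq : 0 ≤ U m istar - U m (Function.update istar k (istar k - 1)) :=
        sub_nonneg.2 (hmaxall _ hnb2)
      have halg := term_nonneg (N : ℝ)
        (a k (Function.update x k (x k + (1 / (N : ℝ)) / 2)) (t m))
        (a k (Function.update x k (x k - (1 / (N : ℝ)) / 2)) (t m))
        (b k x (t m))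
        (U m istar - U m (Function.update istar k (istar k + 1)))
        (U m istar - U m (Function.update istar k (istar k - 1)))
        hN0 hB1 hB2 hp hq
      calc (0:ℝ) ≤ _ := halg
        _ = _ := by ring
    -- f bound
    have hfb : -lam * (U m istar - σ₂) ≤ f x (t m) (U m istar) := by
      have h1 := hfA1 x (t m) (U m istar) σ₂ hcon.le
      have h2 := hfσ₂ x hxc (t m) htmT
      linarith
    -- deltaL1 bound
    set D : ℕ → ℝ := fun j =>
      ((t m - t (j - 1)) ^ (1 - α) - (t m - t j) ^ (1 - α)) /
        ((t j - t (j - 1)) * ((1 - α) * Real.Gamma (1 - α))) with hD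
    have hδeq : deltaL1 α t (fun j => U j istar) m =
        ∑ j ∈ Finset.Icc 1 m, D j * ((U j istar - σ₂) - (U (j - 1) istar - σ₂)) := by
      rw [deltaL1_eq α hα t M hmono m hm hmM]
      exact Finset.sum_congr rfl fun j _ => by ring
    have hδ : D m * (U m istar - σ₂) ≤ deltaL1 α t (fun j => U j istar) m := by
      rw [hδeq]
      apply abel_bound D (fun j => U j istar - σ₂) m hm
      · intro j hj
        have hjm : j < m := by omega
        have := IH j hjm (by omega) istar hiN
        simp only [sub_nonpos]
        exact this
      · exact (D_pos α hα t M hmono m hmM 1 le_rfl hm).le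
      · intro j hj1 hj2
        exact D_mono α hα t M hmono m hmM j hj1 hj2
    have hDm : lam < D m := D_last α lam hα t M hmono m hm hmM (hmesh m hm hmM)
    have hprod : 0 < (D m - lam) * (U m istar - σ₂) :=
      mul_pos (by linarith) (by linarith)
    nlinarith [heq, hδ, hfb, hLh, hprod]

theorem stmt19
    (α T lam σ₁ σ₂ : ℝ)
    (hα : α ∈ Set.Ioo (0 : ℝ) 1) (hT : 0 < T) (hlam : 0 ≤ lam)
    (d : ℕ) (hd : d = 1 ∨ d = 2 ∨ d = 3)
    (a b : Fin d → (Fin d → ℝ) → ℝ → ℝ)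
    -- coefficients are continuous on Ω̄ × [0,T], a_k > 0; here c ≡ 0
    (hacont : ∀ k, ContinuousOn (fun p : (Fin d → ℝ) × ℝ => a k p.1 p.2)
      (cube d ×ˢ Set.Icc 0 T))
    (hbcont : ∀ k, ContinuousOn (fun p : (Fin d → ℝ) × ℝ => b k p.1 p.2)
      (cube d ×ˢ Set.Icc 0 T))
    (hapos : ∀ k, ∀ x ∈ cube d, ∀ t' ∈ Set.Icc (0 : ℝ) T, 0 < a k x t')
    -- f satisfies assumption A1 with constant lam
    (f : (Fin d → ℝ) → ℝ → ℝ → ℝ)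
    (hfc : ∀ x t', Continuous fun s => f x t' s)
    (hfbd : ∀ t' s, ∃ K : ℝ, ∀ x ∈ cube d, |f x t' s| ≤ K)
    (hfA1 : ∀ x t' s₁ s₂, s₂ ≤ s₁ → f x t' s₁ - f x t' s₂ ≥ -lam * (s₁ - s₂))
    -- assumption A2
    (hσ₁ : σ₁ ≤ 0) (hσ₂ : 0 ≤ σ₂)
    (hfσ₁ : ∀ x ∈ cube d, ∀ t' ∈ Set.Ioc (0 : ℝ) T, f x t' σ₁ ≤ 0)
    (hfσ₂ : ∀ x ∈ cube d, ∀ t' ∈ Set.Ioc (0 : ℝ) T, 0 ≤ f x t' σ₂)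
    -- temporal mesh
    (M : ℕ) (hM : 1 ≤ M) (t : ℕ → ℝ)
    (ht0 : t 0 = 0) (htM : t M = T)
    (hmono : ∀ j, j < M → t j < t (j + 1))
    (hmesh : ∀ j, 1 ≤ j → j ≤ M →
      lam * (t j - t (j - 1)) ^ α < 1 / Real.Gamma (2 - α))
    -- spatial mesh and discrete maximum principle condition
    (N : ℕ) (hN : 1 ≤ N)
    (hdmp : ∀ k, ∀ x ∈ cube d, ∀ t' ∈ Set.Ioc (0 : ℝ) T,
      ∀ x' ∈ cube d, ∀ t'' ∈ Set.Ioc (0 : ℝ) T,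
      (1 / 2) * |b k x t'| * (a k x' t'')⁻¹ ≤ (N : ℝ))
    -- initial condition
    (u₀ : (Fin d → ℝ) → ℝ)
    (hu₀ : ∀ x ∈ cube d, σ₁ ≤ u₀ x ∧ u₀ x ≤ σ₂)
    -- the discrete solution (with c ≡ 0)
    (U : ℕ → (Fin d → ℕ) → ℝ)
    (hU : FDScheme α d N M t a b (fun _ _ => 0) f u₀ U) :
    ∀ m, m ≤ M → ∀ i : Fin d → ℕ, (∀ k, i k ≤ N) →
      σ₁ ≤ U m i ∧ U m i ≤ σ₂ := by
  have upper1 := upper_bound α T lam σ₂ hα hlam d a b hapos f hfA1 hσ₂ hfσ₂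
    M hM t ht0 htM hmono hmesh N hN hdmp u₀ (fun x hx => (hu₀ x hx).2) U hU
  -- the negated solution satisfies the scheme with the reflected data
  have hUneg : FDScheme α d N M t a b (fun _ _ => 0)
      (fun x t' s => -f x t' (-s)) (fun x => -u₀ x) (fun m i => -U m i) := by
    refine ⟨?_, ?_, ?_⟩
    · intro i hi
      show -U 0 i = -u₀ (gridPt d N i)
      rw [hU.1 i hi]
    · intro m h1 h2 i hi hb
      show -U m i = 0
      rw [hU.2.1 m h1 h2 i hi hb, neg_zero]
    · intro m h1 h2 i hi
      have heq := hU.2.2 m h1 h2 i hi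
      show deltaL1 α t (fun j => -U j i) m
        + Lh d N a b (fun _ _ => 0) (t m) (fun i' => -U m i') i
        + -f (gridPt d N i) (t m) (-(-U m i)) = 0
      rw [neg_neg, deltaL1_neg, Lh_neg]
      linarith [heq]
  have hfA1' : ∀ x t' s₁ s₂, s₂ ≤ s₁ →
      (-f x t' (-s₁)) - (-f x t' (-s₂)) ≥ -lam * (s₁ - s₂) := by
    intro x t' s₁ s₂ h
    have := hfA1 x t' (-s₂) (-s₁) (by linarith)
    linarith
  have hfσ₂' : ∀ x ∈ cube d, ∀ t' ∈ Set.Ioc (0 : ℝ) T, 0 ≤ -f x t' (-(-σ₁)) := by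
    intro x hx t' ht'
    rw [neg_neg]
    linarith [hfσ₁ x hx t' ht']
  have upper2 := upper_bound α T lam (-σ₁) hα hlam d a b hapos
    (fun x t' s => -f x t' (-s)) hfA1' (by linarith) hfσ₂'
    M hM t ht0 htM hmono hmesh N hN hdmp (fun x => -u₀ x)
    (fun x hx => by show -u₀ x ≤ -σ₁; linarith [(hu₀ x hx).1])
    (fun m i => -U m i) hUneg
  intro m hm i hi
  refine ⟨?_, upper1 m hm i hi⟩
  have h2 : -U m i ≤ -σ₁ := upper2 m hm i hi
  linarith [h2]
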